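/- Let (X,d) be a metric space equipped with its Borel σ-algebra, let r_1,…,r_M ∈ X be prototypes with dissimilarity embedding ζ(g) = (d(g,r_1),…,d(g,r_M)) ∈ ℝ^M, and let d' be a metric on ℝ^M for which there is a constant m' > 0 with d'(a,b) ≤ m'·‖a−b‖₂ for all a,b ∈ ℝ^M. Assume there are constants c, C > 0 with c·d'(ζ(g),ζ(f)) ≤ d(g,f) ≤ C·d'(ζ(g),ζ(f)) for all g,f ∈ X. Let g_1,…,g_n (with n ≥ 2) be i.i.d. X-valued random elements on a probability space (Ω,P) with common law Q, such that E[d(g_1,z)²] < ∞ for every z ∈ X. Let m ∈ X be a Fréchet population mean of Q with Fréchet variation V_Q := E[d(g_1,m)²], and let μ̂ : Ω → X be a measurable Fréchet sample mean of g_1,…,g_n. Put ȳ := (1/n)·Σ_{t=1}^n ζ(g_t), e := E[ζ(g_1)], Var_F := E[‖ζ(g_1) − e‖₂²], v₂ := M·V_Q − Var_F/2, and define Ψ(γ) := P(d(μ̂,m) ≤ γ) and Υ(γ) := P(d'(e,ȳ) ≤ γ) for γ ∈ ℝ (so Υ(s) = 0 for s < 0). Then for every δ > 0, setting b_δ :=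 m'·√(2·(v₂ + δ)), one has for all γ ≥ 0: Υ(γ/C − b_δ) − v₂/δ ≤ Ψ(γ) ≤ Υ(γ/c + b_δ) + v₂/δ. -/

import Mathlib

open MeasureTheory ProbabilityTheory

/-- The dissimilarity embedding `ζ(g) = (d(g,r_1),…,d(g,r_M)) ∈ ℝ^M`. -/
noncomputable def dissEmbed {X : Type*} [MetricSpace X] {M : ℕ} (r : Fin M → X) (g : X) :
    EuclideanSpace ℝ (Fin M) :=
  (WithLp.equiv 2 (Fin M → ℝ)).symm fun i => dist g (r i)

lemma dissEmbed_apply {X : Type*} [MetricSpace X] {M : ℕ} (r : Fin M → X) (g : X) (i : Fin M) :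
    dissEmbed r g i = dist g (r i) := rfl

lemma continuous_dissEmbed {X : Type*} [MetricSpace X] {M : ℕ} (r : Fin M → X) :
    Continuous (dissEmbed r) := by
  apply (PiLp.continuous_toLp (p := 2) (β := fun _ : Fin M => ℝ)).comp
  exact continuous_pi fun i => Continuous.dist continuous_id continuous_const

lemma norm_dissEmbed_sub_sq_le {X : Type*} [MetricSpace X] {M : ℕ} (r : Fin M → X) (g f : X) :
    ‖dissEmbed r g - dissEmbed r f‖ ^ 2 ≤ (M : ℝ) * dist g f ^ 2 := by
  rw [EuclideanSpace.norm_eq, Real.sq_sqrt (by positivity)]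
  calc ∑ i, ‖(dissEmbed r g - dissEmbed r f) i‖ ^ 2
      ≤ ∑ _i : Fin M, dist g f ^ 2 := by
        apply Finset.sum_le_sum
        intro i _
        have : (dissEmbed r g - dissEmbed r f) i = dist g (r i) - dist f (r i) := rfl
        rw [this, Real.norm_eq_abs, sq_abs]
        have h := abs_dist_sub_le g f (r i)
        calc (dist g (r i) - dist f (r i))^2 = |dist g (r i) - dist f (r i)|^2 := (sq_abs _).symm
          _ ≤ dist g f ^ 2 := by
            apply pow_le_pow_left₀ (abs_nonneg _) h
    _ = (M : ℝ) * dist g f ^ 2 := by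
        rw [Finset.sum_const, Finset.card_univ, Fintype.card_fin, nsmul_eq_mul]

lemma sum_norm_sub_sq_eq {F : Type*} [NormedAddCommGroup F] [InnerProductSpace ℝ F]
    {n : ℕ} (a : Fin n → F) (yb : F) (h : (n : ℝ) • yb = ∑ t, a t) (z : F) :
    ∑ t, ‖a t - z‖ ^ 2 = ∑ t, ‖a t - yb‖ ^ 2 + n * ‖z - yb‖ ^ 2 := by
  have expand : ∀ w : F, ∑ t, ‖a t - w‖ ^ 2
      = ∑ t, ‖a t‖ ^ 2 - 2 * inner ℝ ((n : ℝ) • yb) w + (n : ℝ) * ‖w‖ ^ 2 := by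
    intro w
    simp only [@norm_sub_sq_real F _ _]
    rw [Finset.sum_add_distrib, Finset.sum_sub_distrib, ← Finset.mul_sum, ← sum_inner, ← h,
      Finset.sum_const, Finset.card_univ, Fintype.card_fin, nsmul_eq_mul]
  rw [expand z, expand yb, norm_sub_sq_real z yb, real_inner_smul_left, real_inner_smul_left,
    real_inner_self_eq_norm_sq, real_inner_comm z yb]
  ring

lemma le_sqrt_of_sq_le {x y : ℝ} (hx : 0 ≤ x) (h : x ^ 2 ≤ y) : x ≤ Real.sqrt y := by
  rw [← Real.sqrt_sq hx]; exact Real.sqrt_le_sqrt h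

lemma le_sqrt_mul' {a b d : ℝ} (ha : 0 ≤ a) (hb : 0 ≤ b) (hd : 0 ≤ d) (h : a ^ 2 ≤ b * d ^ 2) :
    a ≤ Real.sqrt b * d := by
  have : Real.sqrt b * d = Real.sqrt (b * d ^ 2) := by
    rw [Real.sqrt_mul hb, Real.sqrt_sq hd]
  rw [this]
  exact le_sqrt_of_sq_le ha h

lemma coord_abs_le_norm {M : ℕ} (v : EuclideanSpace ℝ (Fin M)) (i : Fin M) : |v i| ≤ ‖v‖ := by
  rw [EuclideanSpace.norm_eq]
  apply le_sqrt_of_sq_le (abs_nonneg _)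
  rw [sq_abs]
  calc v i ^ 2 = ‖v i‖ ^ 2 := by rw [Real.norm_eq_abs, sq_abs]
    _ ≤ ∑ j, ‖v j‖ ^ 2 :=
      Finset.single_le_sum (f := fun j => ‖v j‖ ^ 2) (fun j _ => by positivity)
        (Finset.mem_univ i)

lemma toReal_measure_union_le {Ω : Type*} [MeasurableSpace Ω] (P : Measure Ω)
    [IsProbabilityMeasure P] {S T B : Set Ω} (h : S ⊆ T ∪ B) :
    (P S).toReal ≤ (P T).toReal + (P B).toReal := by
  have h1 : P S ≤ P T + P B := (measure_mono h).trans (measure_union_le _ _)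
  have h2 := ENNReal.toReal_mono
    (ENNReal.add_ne_top.2 ⟨measure_ne_top P T, measure_ne_top P B⟩) h1
  rwa [ENNReal.toReal_add (measure_ne_top P T) (measure_ne_top P B)] at h2

set_option maxHeartbeats 1000000 in
/-- the paper's Proposition 1: sandwich bound
`Υ(γ/C − b_δ) − v₂/δ ≤ Ψ(γ) ≤ Υ(γ/c + b_δ) + v₂/δ`
relating the CDF `Ψ` of the distance between the sample and population Fréchet means in the
graph space to the CDF `Υ` of the distance between the sample mean and the expectation of the
embedded vectors. -/
theorem frechet_mean_cdf_sandwich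
    {X : Type*} [MetricSpace X] [MeasurableSpace X] [BorelSpace X]
    {Ω : Type*} [MeasurableSpace Ω] (P : Measure Ω) [IsProbabilityMeasure P]
    {M : ℕ} (r : Fin M → X)
    -- d' is a metric on ℝ^M dominated by a multiple of the Euclidean distance
    (d' : EuclideanSpace ℝ (Fin M) → EuclideanSpace ℝ (Fin M) → ℝ)
    (hd'_self : ∀ a, d' a a = 0)
    (hd'_eq : ∀ a b, d' a b = 0 → a = b)
    (hd'_symm : ∀ a b, d' a b = d' b a)
    (hd'_tri : ∀ a b c, d' a c ≤ d' a b + d' b c)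
    (m' : ℝ) (hm' : 0 < m')
    (hd'_dom : ∀ a b, d' a b ≤ m' * ‖a - b‖)
    -- the embedding is bilipschitz w.r.t. d and d'
    (c C : ℝ) (hc : 0 < c) (hC : 0 < C)
    (hbilip_low : ∀ g f : X, c * d' (dissEmbed r g) (dissEmbed r f) ≤ dist g f)
    (hbilip_up : ∀ g f : X, dist g f ≤ C * d' (dissEmbed r g) (dissEmbed r f))
    -- i.i.d. sample g_1,…,g_n with common law Q
    {n : ℕ} (hn : 2 ≤ n) (g : Fin n → Ω → X) (hgm : ∀ t, Measurable (g t))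
    (Q : Measure X) [IsProbabilityMeasure Q]
    (hlaw : ∀ t, Measure.map (g t) P = Q)
    (hindep : iIndepFun g P)
    (hint : ∀ z : X, Integrable (fun x => dist x z ^ 2) Q)
    -- Fréchet population mean m with variation V_Q
    (m : X) (hmean : ∀ z : X, ∫ x, dist x m ^ 2 ∂Q ≤ ∫ x, dist x z ^ 2 ∂Q)
    (VQ : ℝ) (hVQ : VQ = ∫ x, dist x m ^ 2 ∂Q)
    -- measurable Fréchet sample mean
    (μhat : Ω → X) (hμhat : Measurable μhat)
    (hsample : ∀ ω, ∀ z : X,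
      ∑ t, dist (g t ω) (μhat ω) ^ 2 ≤ ∑ t, dist (g t ω) z ^ 2)
    -- embedded sample mean, expectation, variance and v₂
    (ybar : Ω → EuclideanSpace ℝ (Fin M))
    (hybar : ∀ ω, ybar ω = (n : ℝ)⁻¹ • ∑ t, dissEmbed r (g t ω))
    (e : EuclideanSpace ℝ (Fin M)) (he : e = ∫ x, dissEmbed r x ∂Q)
    (VarF : ℝ) (hVarF : VarF = ∫ x, ‖dissEmbed r x - e‖ ^ 2 ∂Q)
    (v2 : ℝ) (hv2 : v2 = (M : ℝ) * VQ - VarF / 2)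
    -- the two CDFs
    (Ψ Υ : ℝ → ℝ)
    (hΨ : ∀ γ, Ψ γ = (P {ω | dist (μhat ω) m ≤ γ}).toReal)
    (hΥ : ∀ γ, Υ γ = (P {ω | d' e (ybar ω) ≤ γ}).toReal) :
    ∀ δ > (0 : ℝ), ∀ γ ≥ (0 : ℝ),
      Υ (γ / C - m' * Real.sqrt (2 * (v2 + δ))) - v2 / δ ≤ Ψ γ ∧
      Ψ γ ≤ Υ (γ / c + m' * Real.sqrt (2 * (v2 + δ))) + v2 / δ := by
  intro δ hδ γ hγ
  have ζcont : Continuous (dissEmbed r) := continuous_dissEmbed r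
  have ζmeas : Measurable (dissEmbed r) := ζcont.measurable
  have hn0 : (0 : ℝ) < n := by
    have : 0 < n := by omega
    exact_mod_cast this
  have hnR : (2 : ℝ) ≤ n := by exact_mod_cast hn
  -- Q-side integrability
  have distm_cont : Continuous fun x : X => dist x m :=
    continuous_id.dist continuous_const
  have distm_int : Integrable (fun x => dist x m) Q :=
    ((memLp_two_iff_integrable_sq distm_cont.aestronglyMeasurable).2 (hint m)).integrable
      one_le_two
  have ζ_int : Integrable (dissEmbed r) Q := by
    refine Integrable.mono'
      ((distm_int.const_mul (Real.sqrt M)).add (integrable_const ‖dissEmbed r m‖))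
      ζcont.aestronglyMeasurable (ae_of_all _ fun x => ?_)
    have h1 : ‖dissEmbed r x - dissEmbed r m‖ ≤ Real.sqrt M * dist x m :=
      le_sqrt_mul' (norm_nonneg _) (Nat.cast_nonneg M) dist_nonneg
        (norm_dissEmbed_sub_sq_le r x m)
    calc ‖dissEmbed r x‖ = ‖(dissEmbed r x - dissEmbed r m) + dissEmbed r m‖ := by
          rw [sub_add_cancel]
      _ ≤ ‖dissEmbed r x - dissEmbed r m‖ + ‖dissEmbed r m‖ := norm_add_le _ _
      _ ≤ Real.sqrt M * dist x m + ‖dissEmbed r m‖ := by linarith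
  have ζm_sq_int : Integrable (fun x => ‖dissEmbed r x - dissEmbed r m‖ ^ 2) Q := by
    refine Integrable.mono' ((hint m).const_mul M)
      ((ζcont.sub continuous_const).norm.pow 2).aestronglyMeasurable
      (ae_of_all _ fun x => ?_)
    rw [Real.norm_eq_abs, abs_of_nonneg (sq_nonneg _)]
    exact norm_dissEmbed_sub_sq_le r x m
  have ζe_sq_int : Integrable (fun x => ‖dissEmbed r x - e‖ ^ 2) Q := by
    refine Integrable.mono'
      (((hint m).const_mul (2 * M)).add (integrable_const (2 * ‖dissEmbed r m - e‖ ^ 2)))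
      ((ζcont.sub continuous_const).norm.pow 2).aestronglyMeasurable
      (ae_of_all _ fun x => ?_)
    rw [Real.norm_eq_abs, abs_of_nonneg (sq_nonneg _)]
    have h1 := norm_dissEmbed_sub_sq_le r x m
    have h2 : ‖dissEmbed r x - e‖ ≤ ‖dissEmbed r x - dissEmbed r m‖ + ‖dissEmbed r m - e‖ := by
      simpa [dist_eq_norm] using dist_triangle (dissEmbed r x) (dissEmbed r m) e
    simp only [Pi.add_apply]
    nlinarith [norm_nonneg (dissEmbed r x - dissEmbed r m), norm_nonneg (dissEmbed r m - e),
      norm_nonneg (dissEmbed r x - e), sq_nonneg (‖dissEmbed r x - dissEmbed r m‖ - ‖dissEmbed r m - e‖),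
      mul_self_nonneg (‖dissEmbed r x - dissEmbed r m‖ + ‖dissEmbed r m - e‖)]
  -- bias-variance on Q
  have hsub : Integrable (fun x => dissEmbed r x - e) Q := ζ_int.sub (integrable_const e)
  have hzero : ∫ x, (dissEmbed r x - e) ∂Q = 0 := by
    rw [integral_sub ζ_int (integrable_const e), integral_const]
    simp [he]
  have hinner_zero : ∀ w : EuclideanSpace ℝ (Fin M),
      ∫ x, (inner ℝ w (dissEmbed r x - e) : ℝ) ∂Q = 0 := by
    intro w
    rw [integral_inner hsub w, hzero, inner_zero_right]
  have hbiasvar : VarF + ‖dissEmbed r m - e‖ ^ 2 ≤ (M : ℝ) * VQ := by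
    have hptw : ∀ x, ‖dissEmbed r x - dissEmbed r m‖ ^ 2
        = ‖dissEmbed r x - e‖ ^ 2
          + (2 * (inner ℝ (e - dissEmbed r m) (dissEmbed r x - e) : ℝ)
            + ‖e - dissEmbed r m‖ ^ 2) := by
      intro x
      have hsplit : dissEmbed r x - dissEmbed r m = (dissEmbed r x - e) + (e - dissEmbed r m) := by
        abel
      rw [hsplit, norm_add_sq_real, real_inner_comm]
      ring
    have hI1 : Integrable (fun x =>
        (2 : ℝ) * (inner ℝ (e - dissEmbed r m) (dissEmbed r x - e) : ℝ)) Q :=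
      (hsub.const_inner _).const_mul 2
    have hI2 : Integrable (fun x =>
        (2 : ℝ) * (inner ℝ (e - dissEmbed r m) (dissEmbed r x - e) : ℝ)
          + ‖e - dissEmbed r m‖ ^ 2) Q := hI1.add (integrable_const _)
    have hexp : ∫ x, ‖dissEmbed r x - dissEmbed r m‖ ^ 2 ∂Q
        = VarF + ‖e - dissEmbed r m‖ ^ 2 := by
      rw [show (fun x => ‖dissEmbed r x - dissEmbed r m‖ ^ 2)
          = fun x => ‖dissEmbed r x - e‖ ^ 2
            + (2 * (inner ℝ (e - dissEmbed r m) (dissEmbed r x - e) : ℝ)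
              + ‖e - dissEmbed r m‖ ^ 2) from funext hptw]
      rw [integral_add ζe_sq_int hI2, integral_add hI1 (integrable_const _),
        integral_const_mul, hinner_zero, integral_const]
      simp [hVarF]
    have hle : ∫ x, ‖dissEmbed r x - dissEmbed r m‖ ^ 2 ∂Q ≤ (M : ℝ) * VQ := by
      rw [hVQ, ← integral_const_mul]
      exact integral_mono ζm_sq_int ((hint m).const_mul _)
        (fun x => norm_dissEmbed_sub_sq_le r x m)
    rw [hexp, norm_sub_rev] at hle
    linarith
  have hVarF_nonneg : 0 ≤ VarF := by
    rw [hVarF]; exact integral_nonneg fun x => sq_nonneg _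
  have hVQ_nonneg : 0 ≤ VQ := by
    rw [hVQ]; exact integral_nonneg fun x => sq_nonneg _
  have hAv2 : ‖dissEmbed r m - e‖ ^ 2 + VarF / 2 ≤ v2 := by
    rw [hv2]; linarith
  have hv2_nonneg : 0 ≤ v2 := by
    have := sq_nonneg ‖dissEmbed r m - e‖; linarith
  -- transfer between P and Q
  have transfer : ∀ (t : Fin n) (f : X → ℝ), Continuous f →
      ∫ ω, f (g t ω) ∂P = ∫ x, f x ∂Q := by
    intro t f hf
    rw [← hlaw t, integral_map (hgm t).aemeasurable hf.aestronglyMeasurable]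
  have transfer_int : ∀ (t : Fin n) (f : X → ℝ), Continuous f → Integrable f Q →
      Integrable (fun ω => f (g t ω)) P := by
    intro t f hf hfi
    rw [← hlaw t] at hfi
    exact (integrable_map_measure hf.aestronglyMeasurable (hgm t).aemeasurable).mp hfi
  have distg_cont : Continuous fun x : X => dist x m ^ 2 := distm_cont.pow 2
  have Ed : ∀ t, ∫ ω, dist (g t ω) m ^ 2 ∂P = VQ := by
    intro t; rw [transfer t _ distg_cont]; exact hVQ.symm
  have Id : ∀ t, Integrable (fun ω => dist (g t ω) m ^ 2) P := fun t =>
    transfer_int t _ distg_cont (hint m)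
  have ζe_cont : Continuous fun x : X => ‖dissEmbed r x - e‖ ^ 2 :=
    ((ζcont.sub continuous_const).norm.pow 2)
  have EZ : ∀ t, ∫ ω, ‖dissEmbed r (g t ω) - e‖ ^ 2 ∂P = VarF := by
    intro t; rw [transfer t _ ζe_cont]; exact hVarF.symm
  have IZ : ∀ t, Integrable (fun ω => ‖dissEmbed r (g t ω) - e‖ ^ 2) P := fun t =>
    transfer_int t _ ζe_cont ζe_sq_int
  -- coordinates
  have coord_cont : ∀ i : Fin M, Continuous fun x : X => dissEmbed r x i := by
    intro i
    exact (EuclideanSpace.proj i).continuous.comp ζcont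
  have ζcoord_int : ∀ i : Fin M, Integrable (fun x => dissEmbed r x i) Q := by
    intro i
    exact (EuclideanSpace.proj i : EuclideanSpace ℝ (Fin M) →L[ℝ] ℝ).integrable_comp ζ_int
  have he_coord : ∀ i : Fin M, ∫ x, dissEmbed r x i ∂Q = e i := by
    intro i
    have := ((EuclideanSpace.proj i :
      EuclideanSpace ℝ (Fin M) →L[ℝ] ℝ).integral_comp_comm ζ_int)
    rw [he]
    exact this
  have Ecoord : ∀ (t : Fin n) (i : Fin M), ∫ ω, dissEmbed r (g t ω) i ∂P = e i := by
    intro t i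
    rw [transfer t _ (coord_cont i)]
    exact he_coord i
  have Icoord : ∀ (t : Fin n) (i : Fin M), Integrable (fun ω => dissEmbed r (g t ω) i) P :=
    fun t i => transfer_int t _ (coord_cont i) (ζcoord_int i)
  -- cross terms vanish
  have Zmeas : ∀ t, Measurable fun ω => dissEmbed r (g t ω) := fun t => ζmeas.comp (hgm t)
  have hXi : ∀ (u : Fin n) (i : Fin M),
      Integrable (fun ω => dissEmbed r (g u ω) i - e i) P :=
    fun u i => (Icoord u i).sub (integrable_const _)
  have hXzero : ∀ (u : Fin n) (i : Fin M),
      ∫ ω, (dissEmbed r (g u ω) i - e i) ∂P = 0 := by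
    intro u i
    rw [integral_sub (Icoord u i) (integrable_const _), Ecoord u i, integral_const]
    simp
  have hinner_expand : ∀ (s t : Fin n) (ω : Ω),
      (inner ℝ (dissEmbed r (g s ω) - e) (dissEmbed r (g t ω) - e) : ℝ)
        = ∑ i, (dissEmbed r (g s ω) i - e i) * (dissEmbed r (g t ω) i - e i) := by
    intro s t ω
    rw [PiLp.inner_apply]
    apply Finset.sum_congr rfl
    intro i _
    simp [RCLike.inner_apply, conj_trivial, PiLp.sub_apply, mul_comm]
  have hprod_int : ∀ (s t : Fin n) (i : Fin M),
      Integrable (fun ω =>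
        (dissEmbed r (g s ω) i - e i) * (dissEmbed r (g t ω) i - e i)) P := by
    intro s t i
    refine Integrable.mono' (((IZ s).add (IZ t)).const_mul (1 / 2))
      (((((coord_cont i).measurable.comp (hgm s)).sub measurable_const).mul
        (((coord_cont i).measurable.comp (hgm t)).sub measurable_const)).aestronglyMeasurable)
      (ae_of_all _ fun ω => ?_)
    have h1 : |dissEmbed r (g s ω) i - e i| ≤ ‖dissEmbed r (g s ω) - e‖ := by
      have := coord_abs_le_norm (dissEmbed r (g s ω) - e) i
      simpa [PiLp.sub_apply] using this
    have h2 : |dissEmbed r (g t ω) i - e i| ≤ ‖dissEmbed r (g t ω) - e‖ := by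
      have := coord_abs_le_norm (dissEmbed r (g t ω) - e) i
      simpa [PiLp.sub_apply] using this
    rw [Real.norm_eq_abs, abs_mul]
    simp only [Pi.add_apply]
    calc |dissEmbed r (g s ω) i - e i| * |dissEmbed r (g t ω) i - e i|
        ≤ ‖dissEmbed r (g s ω) - e‖ * ‖dissEmbed r (g t ω) - e‖ :=
          mul_le_mul h1 h2 (abs_nonneg _) (norm_nonneg _)
      _ ≤ 1 / 2 * (‖dissEmbed r (g s ω) - e‖ ^ 2 + ‖dissEmbed r (g t ω) - e‖ ^ 2) := by
          nlinarith [sq_nonneg (‖dissEmbed r (g s ω) - e‖ - ‖dissEmbed r (g t ω) - e‖)]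
  have hcross : ∀ s t : Fin n, s ≠ t →
      ∫ ω, (inner ℝ (dissEmbed r (g s ω) - e) (dissEmbed r (g t ω) - e) : ℝ) ∂P = 0 := by
    intro s t hst
    rw [show (fun ω => (inner ℝ (dissEmbed r (g s ω) - e) (dissEmbed r (g t ω) - e) : ℝ))
        = fun ω => ∑ i, (dissEmbed r (g s ω) i - e i) * (dissEmbed r (g t ω) i - e i)
      from funext (hinner_expand s t)]
    rw [integral_finset_sum _ fun i _ => hprod_int s t i]
    apply Finset.sum_eq_zero
    intro i _
    have φmeas : Measurable fun x : X => dissEmbed r x i - e i :=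
      ((coord_cont i).measurable).sub measurable_const
    have hind : IndepFun (fun ω => dissEmbed r (g s ω) i - e i)
        (fun ω => dissEmbed r (g t ω) i - e i) P :=
      (hindep.indepFun hst).comp φmeas φmeas
    have := IndepFun.integral_mul_eq_mul_integral hind (hXi s i).aestronglyMeasurable (hXi t i).aestronglyMeasurable
    rw [show (fun ω => dissEmbed r (g s ω) i - e i) * (fun ω => dissEmbed r (g t ω) i - e i)
        = fun ω => (dissEmbed r (g s ω) i - e i) * (dissEmbed r (g t ω) i - e i) from rfl] at this
    rw [this, hXzero s i, hXzero t i, mul_zero]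
  -- sample mean of embedded points
  have hybar_meas : Measurable ybar := by
    rw [show ybar = fun ω => (n : ℝ)⁻¹ • ∑ t, dissEmbed r (g t ω) from funext hybar]
    exact (Finset.measurable_sum Finset.univ fun t _ => Zmeas t).const_smul ((n : ℝ)⁻¹)
  have hmean_eq : ∀ ω, (n : ℝ) • ybar ω = ∑ t, dissEmbed r (g t ω) := by
    intro ω
    rw [hybar ω, smul_smul, mul_inv_cancel₀ (ne_of_gt hn0), one_smul]
  have ybar_sub_rep : ∀ ω, ybar ω - e = (n : ℝ)⁻¹ • ∑ t, (dissEmbed r (g t ω) - e) := by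
    intro ω
    rw [Finset.sum_sub_distrib, smul_sub, ← hybar ω, Finset.sum_const, Finset.card_univ,
      Fintype.card_fin]
    congr 1
    rw [← Nat.cast_smul_eq_nsmul ℝ, smul_smul, inv_mul_cancel₀ (ne_of_gt hn0), one_smul]
  have hnorm_ybar : ∀ ω, ‖ybar ω - e‖ ^ 2 = (n : ℝ)⁻¹ ^ 2
      * ∑ s, ∑ t, (inner ℝ (dissEmbed r (g s ω) - e) (dissEmbed r (g t ω) - e) : ℝ) := by
    intro ω
    rw [ybar_sub_rep ω, norm_smul, mul_pow, Real.norm_eq_abs, sq_abs]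
    congr 1
    rw [← real_inner_self_eq_norm_sq, sum_inner]
    exact Finset.sum_congr rfl fun s _ => by rw [inner_sum]
  have hinner_int : ∀ s t : Fin n, Integrable (fun ω =>
      (inner ℝ (dissEmbed r (g s ω) - e) (dissEmbed r (g t ω) - e) : ℝ)) P := by
    intro s t
    rw [show (fun ω => (inner ℝ (dissEmbed r (g s ω) - e) (dissEmbed r (g t ω) - e) : ℝ))
        = fun ω => ∑ i, (dissEmbed r (g s ω) i - e i) * (dissEmbed r (g t ω) i - e i)
      from funext (hinner_expand s t)]
    exact integrable_finset_sum _ fun i _ => hprod_int s t i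
  have Iybar_e : Integrable (fun ω => ‖ybar ω - e‖ ^ 2) P := by
    rw [show (fun ω => ‖ybar ω - e‖ ^ 2) = fun ω => (n : ℝ)⁻¹ ^ 2
        * ∑ s, ∑ t, (inner ℝ (dissEmbed r (g s ω) - e) (dissEmbed r (g t ω) - e) : ℝ)
      from funext hnorm_ybar]
    exact (integrable_finset_sum _ fun s _ =>
      integrable_finset_sum _ fun t _ => hinner_int s t).const_mul _
  have Eybar_e : ∫ ω, ‖ybar ω - e‖ ^ 2 ∂P = VarF / n := by
    rw [show (fun ω => ‖ybar ω - e‖ ^ 2) = fun ω => (n : ℝ)⁻¹ ^ 2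
        * ∑ s, ∑ t, (inner ℝ (dissEmbed r (g s ω) - e) (dissEmbed r (g t ω) - e) : ℝ)
      from funext hnorm_ybar]
    rw [integral_const_mul, integral_finset_sum _ fun s _ =>
      integrable_finset_sum _ fun t _ => hinner_int s t]
    have hsum : ∀ s : Fin n, ∫ ω,
        (∑ t, (inner ℝ (dissEmbed r (g s ω) - e) (dissEmbed r (g t ω) - e) : ℝ)) ∂P = VarF := by
      intro s
      rw [integral_finset_sum _ fun t _ => hinner_int s t]
      rw [Finset.sum_eq_single s]
      · rw [show (fun ω => (inner ℝ (dissEmbed r (g s ω) - e) (dissEmbed r (g s ω) - e) : ℝ))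
            = fun ω => ‖dissEmbed r (g s ω) - e‖ ^ 2 from
            funext fun ω => real_inner_self_eq_norm_sq _]
        exact EZ s
      · intro t _ hts
        exact hcross s t (Ne.symm hts)
      · intro h
        exact absurd (Finset.mem_univ s) h
    rw [Finset.sum_congr rfl fun s _ => hsum s, Finset.sum_const, Finset.card_univ,
      Fintype.card_fin, nsmul_eq_mul]
    field_simp
  -- the key pointwise inequality
  have hW_key : ∀ ω, (n : ℝ) * ‖dissEmbed r (μhat ω) - ybar ω‖ ^ 2
      + ∑ t, ‖dissEmbed r (g t ω) - e‖ ^ 2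
      ≤ (M : ℝ) * ∑ t, dist (g t ω) m ^ 2 + (n : ℝ) * ‖ybar ω - e‖ ^ 2 := by
    intro ω
    have id1 := sum_norm_sub_sq_eq (fun t => dissEmbed r (g t ω)) (ybar ω) (hmean_eq ω)
      (dissEmbed r (μhat ω))
    have id2 := sum_norm_sub_sq_eq (fun t => dissEmbed r (g t ω)) (ybar ω) (hmean_eq ω) e
    have hb1 : ∑ t, ‖dissEmbed r (g t ω) - dissEmbed r (μhat ω)‖ ^ 2
        ≤ (M : ℝ) * ∑ t, dist (g t ω) m ^ 2 := by
      calc ∑ t, ‖dissEmbed r (g t ω) - dissEmbed r (μhat ω)‖ ^ 2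
          ≤ ∑ t, (M : ℝ) * dist (g t ω) (μhat ω) ^ 2 :=
            Finset.sum_le_sum fun t _ => norm_dissEmbed_sub_sq_le r _ _
        _ = (M : ℝ) * ∑ t, dist (g t ω) (μhat ω) ^ 2 := by rw [Finset.mul_sum]
        _ ≤ (M : ℝ) * ∑ t, dist (g t ω) m ^ 2 :=
            mul_le_mul_of_nonneg_left (hsample ω m) (Nat.cast_nonneg M)
    rw [norm_sub_rev e (ybar ω)] at id2
    linarith [id1, id2, hb1]
  have hsum_sq_nonneg : ∀ ω, (0 : ℝ) ≤ ∑ t, ‖dissEmbed r (g t ω) - e‖ ^ 2 :=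
    fun ω => Finset.sum_nonneg fun t _ => sq_nonneg _
  have hW_simple : ∀ ω, ‖dissEmbed r (μhat ω) - ybar ω‖ ^ 2
      ≤ (n : ℝ)⁻¹ * ((M : ℝ) * ∑ t, dist (g t ω) m ^ 2 + (n : ℝ) * ‖ybar ω - e‖ ^ 2) := by
    intro ω
    rw [inv_mul_eq_div, le_div_iff₀ hn0]
    have := hW_key ω
    have h0 := hsum_sq_nonneg ω
    linarith [this, h0]
  have hW_meas : Measurable fun ω => ‖dissEmbed r (μhat ω) - ybar ω‖ ^ 2 :=
    (((ζmeas.comp hμhat).sub hybar_meas).norm.pow_const 2)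
  have W_int : Integrable (fun ω => ‖dissEmbed r (μhat ω) - ybar ω‖ ^ 2) P := by
    refine Integrable.mono'
      ((((integrable_finset_sum Finset.univ fun t _ => Id t).const_mul (M : ℝ)).add
        (Iybar_e.const_mul (n : ℝ))).const_mul (n : ℝ)⁻¹)
      hW_meas.aestronglyMeasurable (ae_of_all _ fun ω => ?_)
    rw [Real.norm_eq_abs, abs_of_nonneg (sq_nonneg _)]
    simpa using hW_simple ω
  have EW_le : ∫ ω, ‖dissEmbed r (μhat ω) - ybar ω‖ ^ 2 ∂P ≤ v2 := by
    have int_lhs : Integrable (fun ω => (n : ℝ) * ‖dissEmbed r (μhat ω) - ybar ω‖ ^ 2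
        + ∑ t, ‖dissEmbed r (g t ω) - e‖ ^ 2) P :=
      (W_int.const_mul _).add (integrable_finset_sum _ fun t _ => IZ t)
    have int_rhs : Integrable (fun ω => (M : ℝ) * ∑ t, dist (g t ω) m ^ 2
        + (n : ℝ) * ‖ybar ω - e‖ ^ 2) P :=
      ((integrable_finset_sum Finset.univ fun t _ => Id t).const_mul _).add
        (Iybar_e.const_mul _)
    have hmono := integral_mono int_lhs int_rhs hW_key
    rw [integral_add (W_int.const_mul _) (integrable_finset_sum _ fun t _ => IZ t),
      integral_add ((integrable_finset_sum Finset.univ fun t _ => Id t).const_mul _)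
        (Iybar_e.const_mul _),
      integral_const_mul, integral_const_mul, integral_const_mul,
      integral_finset_sum _ fun t _ => IZ t, integral_finset_sum _ fun t _ => Id t,
      Finset.sum_congr rfl fun t _ => EZ t, Finset.sum_congr rfl fun t _ => Ed t,
      Finset.sum_const, Finset.sum_const, Finset.card_univ, Fintype.card_fin,
      nsmul_eq_mul, nsmul_eq_mul, Eybar_e] at hmono
    -- hmono : n * ∫W + n * VarF ≤ M * (n * VQ) + n * (VarF / n)
    have hdiv : (n : ℝ) * (VarF / n) = VarF := by field_simp
    rw [hdiv] at hmono
    rw [hv2]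
    nlinarith [hVarF_nonneg, hnR, hmono]
  -- Markov
  have hτpos : (0 : ℝ) < VarF / 2 + δ := by linarith
  have hmarkov : (P {ω | VarF / 2 + δ ≤ ‖dissEmbed r (μhat ω) - ybar ω‖ ^ 2}).toReal
      ≤ v2 / δ := by
    have h1 := mul_meas_ge_le_integral_of_nonneg
      (ae_of_all P fun ω => sq_nonneg ‖dissEmbed r (μhat ω) - ybar ω‖) W_int (VarF / 2 + δ)
    have h2 : (VarF / 2 + δ)
        * (P {ω | VarF / 2 + δ ≤ ‖dissEmbed r (μhat ω) - ybar ω‖ ^ 2}).toReal ≤ v2 :=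
      h1.trans EW_le
    have h3 : (P {ω | VarF / 2 + δ ≤ ‖dissEmbed r (μhat ω) - ybar ω‖ ^ 2}).toReal
        ≤ v2 / (VarF / 2 + δ) := by
      rw [le_div_iff₀ hτpos]
      linarith [h2, mul_comm (VarF / 2 + δ)
        (P {ω | VarF / 2 + δ ≤ ‖dissEmbed r (μhat ω) - ybar ω‖ ^ 2}).toReal]
    refine h3.trans ?_
    apply div_le_div_of_nonneg_left hv2_nonneg hδ
    linarith
  -- good event bound
  have hgood : ∀ ω, ‖dissEmbed r (μhat ω) - ybar ω‖ ^ 2 < VarF / 2 + δ →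
      d' (dissEmbed r (μhat ω)) (ybar ω) + d' (dissEmbed r m) e
        ≤ m' * Real.sqrt (2 * (v2 + δ)) := by
    intro ω hω
    have ha := hd'_dom (dissEmbed r (μhat ω)) (ybar ω)
    have hb := hd'_dom (dissEmbed r m) e
    have hab : ‖dissEmbed r (μhat ω) - ybar ω‖ + ‖dissEmbed r m - e‖
        ≤ Real.sqrt (2 * (v2 + δ)) := by
      apply le_sqrt_of_sq_le (by positivity)
      have hsq : (‖dissEmbed r (μhat ω) - ybar ω‖ + ‖dissEmbed r m - e‖) ^ 2
          ≤ 2 * (‖dissEmbed r (μhat ω) - ybar ω‖ ^ 2 + ‖dissEmbed r m - e‖ ^ 2) := by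
        nlinarith [sq_nonneg (‖dissEmbed r (μhat ω) - ybar ω‖ - ‖dissEmbed r m - e‖)]
      linarith [hAv2, hω, hsq]
    calc d' (dissEmbed r (μhat ω)) (ybar ω) + d' (dissEmbed r m) e
        ≤ m' * ‖dissEmbed r (μhat ω) - ybar ω‖ + m' * ‖dissEmbed r m - e‖ := add_le_add ha hb
      _ = m' * (‖dissEmbed r (μhat ω) - ybar ω‖ + ‖dissEmbed r m - e‖) := by ring
      _ ≤ m' * Real.sqrt (2 * (v2 + δ)) := mul_le_mul_of_nonneg_left hab hm'.le
  -- assembly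
  set bδ := m' * Real.sqrt (2 * (v2 + δ)) with hbδ
  set B := {ω | VarF / 2 + δ ≤ ‖dissEmbed r (μhat ω) - ybar ω‖ ^ 2} with hB
  constructor
  · -- lower bound : Υ (γ / C - bδ) - v2 / δ ≤ Ψ γ
    have hsubL : {ω | d' e (ybar ω) ≤ γ / C - bδ} ⊆ {ω | dist (μhat ω) m ≤ γ} ∪ B := by
      intro ω hω
      by_cases hBm : VarF / 2 + δ ≤ ‖dissEmbed r (μhat ω) - ybar ω‖ ^ 2
      · exact Or.inr hBm
      · left
        push_neg at hBm
        have hg := hgood ω hBm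
        have hω' : d' e (ybar ω) ≤ γ / C - bδ := hω
        have htri : d' (dissEmbed r (μhat ω)) (dissEmbed r m)
            ≤ d' (dissEmbed r (μhat ω)) (ybar ω) + d' (ybar ω) e + d' e (dissEmbed r m) := by
          calc d' (dissEmbed r (μhat ω)) (dissEmbed r m)
              ≤ d' (dissEmbed r (μhat ω)) (ybar ω) + d' (ybar ω) (dissEmbed r m) :=
                hd'_tri _ _ _
            _ ≤ d' (dissEmbed r (μhat ω)) (ybar ω)
                + (d' (ybar ω) e + d' e (dissEmbed r m)) := by
                linarith [hd'_tri (ybar ω) e (dissEmbed r m)]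
            _ = _ := by ring
        have h1 : d' (ybar ω) e = d' e (ybar ω) := hd'_symm _ _
        have h2 : d' e (dissEmbed r m) = d' (dissEmbed r m) e := hd'_symm _ _
        have hdd : d' (dissEmbed r (μhat ω)) (dissEmbed r m) ≤ γ / C := by
          rw [h1, h2] at htri
          linarith [hg, hω', htri]
        show dist (μhat ω) m ≤ γ
        calc dist (μhat ω) m ≤ C * d' (dissEmbed r (μhat ω)) (dissEmbed r m) :=
              hbilip_up (μhat ω) m
          _ ≤ C * (γ / C) := mul_le_mul_of_nonneg_left hdd hC.le
          _ = γ := by field_simp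
    have := toReal_measure_union_le P hsubL
    rw [hΨ γ, hΥ (γ / C - bδ)]
    linarith [this, hmarkov]
  · -- upper bound : Ψ γ ≤ Υ (γ / c + bδ) + v2 / δ
    have hsubU : {ω | dist (μhat ω) m ≤ γ} ⊆ {ω | d' e (ybar ω) ≤ γ / c + bδ} ∪ B := by
      intro ω hω
      by_cases hBm : VarF / 2 + δ ≤ ‖dissEmbed r (μhat ω) - ybar ω‖ ^ 2
      · exact Or.inr hBm
      · left
        push_neg at hBm
        have hg := hgood ω hBm
        have hω' : dist (μhat ω) m ≤ γ := hω
        have hdd : d' (dissEmbed r (μhat ω)) (dissEmbed r m) ≤ γ / c := by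
          rw [le_div_iff₀ hc]
          calc d' (dissEmbed r (μhat ω)) (dissEmbed r m) * c
              = c * d' (dissEmbed r (μhat ω)) (dissEmbed r m) := by ring
            _ ≤ dist (μhat ω) m := hbilip_low (μhat ω) m
            _ ≤ γ := hω'
        show d' e (ybar ω) ≤ γ / c + bδ
        calc d' e (ybar ω)
            ≤ d' e (dissEmbed r (μhat ω)) + d' (dissEmbed r (μhat ω)) (ybar ω) :=
              hd'_tri _ _ _
          _ ≤ (d' e (dissEmbed r m) + d' (dissEmbed r m) (dissEmbed r (μhat ω)))
              + d' (dissEmbed r (μhat ω)) (ybar ω) := by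
              linarith [hd'_tri e (dissEmbed r m) (dissEmbed r (μhat ω))]
          _ ≤ γ / c + bδ := by
              have h1 : d' e (dissEmbed r m) = d' (dissEmbed r m) e := hd'_symm _ _
              have h2 : d' (dissEmbed r m) (dissEmbed r (μhat ω))
                  = d' (dissEmbed r (μhat ω)) (dissEmbed r m) := hd'_symm _ _
              rw [h1, h2]
              linarith [hg, hdd]
    have := toReal_measure_union_le P hsubU
    rw [hΨ γ, hΥ (γ / c + bδ)]
    linarith [this, hmarkov]
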